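/- Perturbation stability of the backward Euler Galerkin scheme: let u solve the backward Euler scheme with data f : ℕ → H and let w solve the same scheme with data g : ℕ → H, and suppose ‖f(m) − g(m)‖ ≤ F for all m ≥ 1. Then for every m ≥ 1, ‖u(m) − w(m)‖ ≤ ((1 − e^{−γ k m})/γ)·F. -/

import Mathlib

open RealInnerProductSpace

/-- **Perturbation stability of the backward Euler Galerkin scheme.** Let `H`
be a real Hilbert space, `X` a subspace of `H`, `k > 0` a time step and `B` a
bilinear form on `H` with coercivity bound `B v v ≥ γ‖v‖²` on `X`, `γ > 0`.
Let `u` solve the backward Euler scheme with data `f : ℕ → H` and `w` solve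
the same scheme with data `g : ℕ → H`. If `‖f m − g m‖ ≤ F` for all `m ≥ 1`,
then for every `m ≥ 1`, `‖u m − w m‖ ≤ ((1 − e^{−γkm})/γ) * F`. -/
theorem backwardEuler_perturbation_stability
    {H : Type*} [NormedAddCommGroup H] [InnerProductSpace ℝ H] [CompleteSpace H]
    (X : Submodule ℝ H) (k γ : ℝ) (hk : 0 < k) (hγ : 0 < γ)
    (B : H →ₗ[ℝ] H →ₗ[ℝ] ℝ)
    (hcoer : ∀ v ∈ X, γ * ‖v‖ ^ 2 ≤ B v v)
    (f g u w : ℕ → H)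
    (hu0 : u 0 = 0) (huX : ∀ m, u m ∈ X)
    (huscheme : ∀ m, 1 ≤ m → ∀ v ∈ X,
      ⟪u m, v⟫ + k * B (u m) v = k * ⟪f m, v⟫ + ⟪u (m - 1), v⟫)
    (hw0 : w 0 = 0) (hwX : ∀ m, w m ∈ X)
    (hwscheme : ∀ m, 1 ≤ m → ∀ v ∈ X,
      ⟪w m, v⟫ + k * B (w m) v = k * ⟪g m, v⟫ + ⟪w (m - 1), v⟫)
    (F : ℝ) (hF : ∀ m, 1 ≤ m → ‖f m - g m‖ ≤ F) :
    ∀ m, 1 ≤ m → ‖u m - w m‖ ≤ ((1 - Real.exp (-(γ * k * m))) / γ) * F := by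
  have hF0 : 0 ≤ F := le_trans (norm_nonneg _) (hF 1 le_rfl)
  have h1 : (0:ℝ) < 1 + k * γ := by positivity
  set r : ℝ := (1 + k * γ)⁻¹ with hrdef
  have hr : 0 < r := inv_pos.mpr h1
  -- one-step estimate
  have step : ∀ n : ℕ, ‖u (n+1) - w (n+1)‖ ≤ (k * F + ‖u n - w n‖) * r := by
    intro n
    set e : H := u (n+1) - w (n+1) with he
    have heX : e ∈ X := X.sub_mem (huX _) (hwX _)
    have hu := huscheme (n+1) (Nat.le_add_left 1 n) e heX
    have hw := hwscheme (n+1) (Nat.le_add_left 1 n) e heX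
    simp only [Nat.add_sub_cancel] at hu hw
    have hB : B e e = B (u (n+1)) e - B (w (n+1)) e := by
      rw [he, show B (u (n+1) - w (n+1)) = B (u (n+1)) - B (w (n+1)) from map_sub B _ _,
        LinearMap.sub_apply]
    have hi : ⟪e, e⟫ = ⟪u (n+1), e⟫ - ⟪w (n+1), e⟫ := inner_sub_left _ _ _
    have hif : ⟪f (n+1) - g (n+1), e⟫ = ⟪f (n+1), e⟫ - ⟪g (n+1), e⟫ :=
      inner_sub_left _ _ _
    have hiuw : ⟪u n - w n, e⟫ = ⟪u n, e⟫ - ⟪w n, e⟫ := inner_sub_left _ _ _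
    have heq : ⟪e, e⟫ + k * B e e
        = k * ⟪f (n+1) - g (n+1), e⟫ + ⟪u n - w n, e⟫ := by
      rw [hB, hi, hif, hiuw]; linarith
    have hcoe : γ * ‖e‖ ^ 2 ≤ B e e := hcoer e heX
    have hnorm : ⟪e, e⟫ = ‖e‖ ^ 2 := real_inner_self_eq_norm_sq e
    have hb1 : ⟪f (n+1) - g (n+1), e⟫ ≤ F * ‖e‖ := by
      calc ⟪f (n+1) - g (n+1), e⟫ ≤ ‖f (n+1) - g (n+1)‖ * ‖e‖ := real_inner_le_norm _ _
        _ ≤ F * ‖e‖ := by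
            apply mul_le_mul_of_nonneg_right (hF (n+1) (Nat.le_add_left 1 n)) (norm_nonneg _)
    have hb2 : ⟪u n - w n, e⟫ ≤ ‖u n - w n‖ * ‖e‖ := real_inner_le_norm _ _
    have key : (1 + k * γ) * ‖e‖ ^ 2 ≤ (k * F + ‖u n - w n‖) * ‖e‖ := by
      nlinarith [hk.le]
    rcases eq_or_lt_of_le (norm_nonneg e) with h0 | h0
    · rw [← h0]
      positivity
    · rw [hrdef, ← div_eq_mul_inv, le_div_iff₀ h1]
      calc ‖e‖ * (1 + k * γ) = (1 + k * γ) * ‖e‖ ^ 2 / ‖e‖ := by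
            field_simp
        _ ≤ (k * F + ‖u n - w n‖) * ‖e‖ / ‖e‖ := by
            apply div_le_div_of_nonneg_right key h0.le |>.trans_eq rfl
        _ = k * F + ‖u n - w n‖ := by field_simp
  -- iterate
  have main : ∀ n : ℕ, ‖u n - w n‖ ≤ (F / γ) * (1 - r ^ n) := by
    intro n
    induction n with
    | zero => simp [hu0, hw0]
    | succ n ih =>
        have h2 : ‖u (n+1) - w (n+1)‖ ≤ (k * F + (F / γ) * (1 - r ^ n)) * r := by
          refine (step n).trans ?_
          apply mul_le_mul_of_nonneg_right _ hr.le
          linarith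
        have halg : (k * F + (F / γ) * (1 - r ^ n)) * r = (F / γ) * (1 - r ^ (n+1)) := by
          rw [hrdef]
          field_simp
          linear_combination (F * (1 + k * γ)⁻¹ ^ n) * inv_mul_cancel₀ h1.ne'
        rw [halg] at h2
        exact h2
  intro m hm
  have hexp : Real.exp (-(γ * k * m)) ≤ r ^ m := by
    have h3 : Real.exp (-(γ * k * m)) = (Real.exp (-(k * γ))) ^ m := by
      rw [← Real.exp_nat_mul]; ring_nf
    rw [h3]
    apply pow_le_pow_left₀ (Real.exp_nonneg _)
    rw [Real.exp_neg, hrdef]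
    apply inv_anti₀ h1
    have := Real.add_one_le_exp (k * γ)
    linarith
  calc ‖u m - w m‖ ≤ (F / γ) * (1 - r ^ m) := main m
    _ ≤ (F / γ) * (1 - Real.exp (-(γ * k * m))) := by
        apply mul_le_mul_of_nonneg_left (by linarith) (by positivity)
    _ = ((1 - Real.exp (-(γ * k * m))) / γ) * F := by ring
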